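/- Let q be a real number with 0 < q < 1, let x ≥ 0 be real, and let k ≥ 0 be an integer. For each z with 0 ≤ z < 1 the series ∑_{n=0}^∞ (−1)^n z^n [n+x]_q^k converges absolutely, and the Abel limit as z → 1⁻ of [2]_q ∑_{n=0}^∞ (−1)^n z^n [n+x]_q^k exists and equals 𝓔_{k,q}(x). (This is the precise meaning of the identity 𝓔_{k,q}(x) = [2]_q ∑_{n=0}^∞ (−1)^n [n+x]_q^k.) -/

import Mathlib

/-- The modified `q`-Euler polynomials
`𝓔_{n,q}(x) = [2]_q (1/(1-q))^n ∑_{l=0}^n C(n,l) (-1)^l q^{lx}/(1+q^l)`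
(here `q ^ ((l : ℝ) * x)` is the real power `rpow`). -/
noncomputable def modqEulerPoly (q : ℝ) (n : ℕ) (x : ℝ) : ℝ :=
  (1 + q) * (1 / (1 - q)) ^ n *
    ∑ l ∈ Finset.range (n + 1),
      (n.choose l : ℝ) * (-1) ^ l * q ^ ((l : ℝ) * x) / (1 + q ^ l)

/-- `𝓔_{k,q}(x) = [2]_q ∑_{n=0}^∞ (-1)^n [n+x]_q^k` in the Abel sense: the series
`∑ (-1)^n z^n [n+x]_q^k` converges absolutely for `0 ≤ z < 1`, and
`[2]_q` times its sum tends to `𝓔_{k,q}(x)` as `z → 1⁻`. -/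
theorem modqEulerPoly_eq_abel_sum (q x : ℝ) (hq0 : 0 < q) (hq1 : q < 1)
    (hx : 0 ≤ x) (k : ℕ) :
    (∀ z : ℝ, 0 ≤ z → z < 1 →
      Summable fun n : ℕ =>
        |(-1) ^ n * z ^ n * ((1 - q ^ ((n : ℝ) + x)) / (1 - q)) ^ k|) ∧
    Filter.Tendsto
      (fun z : ℝ =>
        (1 + q) * ∑' n : ℕ, (-1) ^ n * z ^ n * ((1 - q ^ ((n : ℝ) + x)) / (1 - q)) ^ k)
      (nhdsWithin 1 (Set.Ico 0 1)) (nhds (modqEulerPoly q k x)) := by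
  have hq1' : 0 < 1 - q := by linarith
  -- basic facts about q^(n+x)
  have hnx : ∀ n : ℕ, (0:ℝ) ≤ q ^ ((n : ℝ) + x) := fun n =>
    Real.rpow_nonneg hq0.le _
  have hnx1 : ∀ n : ℕ, q ^ ((n : ℝ) + x) ≤ 1 := fun n =>
    Real.rpow_le_one hq0.le hq1.le (by positivity)
  have hE0 : ∀ n : ℕ, 0 ≤ (1 - q ^ ((n : ℝ) + x)) / (1 - q) := fun n =>
    div_nonneg (by linarith [hnx1 n]) hq1'.le
  have hE1 : ∀ n : ℕ, (1 - q ^ ((n : ℝ) + x)) / (1 - q) ≤ 1 / (1 - q) := by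
    intro n
    gcongr
    linarith [hnx n]
  -- summability
  have hsum : ∀ z : ℝ, 0 ≤ z → z < 1 →
      Summable fun n : ℕ =>
        |(-1) ^ n * z ^ n * ((1 - q ^ ((n : ℝ) + x)) / (1 - q)) ^ k| := by
    intro z hz0 hz1
    have hg : Summable (fun n : ℕ => (1 / (1 - q)) ^ k * z ^ n) :=
      (summable_geometric_of_lt_one hz0 hz1).mul_left _
    have hb : ∀ n : ℕ,
        |(-1) ^ n * z ^ n * ((1 - q ^ ((n : ℝ) + x)) / (1 - q)) ^ k|
          ≤ (1 / (1 - q)) ^ k * z ^ n := by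
      intro n
      rw [abs_mul, abs_mul, abs_pow, abs_neg, abs_one, one_pow, one_mul,
        abs_of_nonneg (pow_nonneg hz0 n), abs_of_nonneg (pow_nonneg (hE0 n) k),
        mul_comm]
      exact mul_le_mul_of_nonneg_right
        (pow_le_pow_left₀ (hE0 n) (hE1 n) k) (pow_nonneg hz0 n)
    exact Summable.of_nonneg_of_le (fun n => abs_nonneg _) hb hg
  refine ⟨hsum, ?_⟩
  -- coefficients
  set A : ℕ → ℝ := fun l =>
    (1 / (1 - q)) ^ k * (k.choose l : ℝ) * (-1) ^ l * q ^ ((l : ℝ) * x) with hA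
  have hqlx : ∀ l : ℕ, (q ^ x) ^ l = q ^ ((l : ℝ) * x) := by
    intro l
    rw [mul_comm, Real.rpow_mul hq0.le, Real.rpow_natCast]
  have hql1 : ∀ l : ℕ, q ^ l ≤ 1 := fun l => pow_le_one₀ hq0.le hq1.le
  have hql0 : ∀ l : ℕ, (0:ℝ) < q ^ l := fun l => pow_pos hq0 l
  -- key identity for the tsum
  have key : ∀ z : ℝ, 0 ≤ z → z < 1 →
      (∑' n : ℕ, (-1) ^ n * z ^ n * ((1 - q ^ ((n : ℝ) + x)) / (1 - q)) ^ k)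
        = ∑ l ∈ Finset.range (k + 1), A l * (1 + z * q ^ l)⁻¹ := by
    intro z hz0 hz1
    have hr : ∀ l : ℕ, ‖-(z * q ^ l)‖ < 1 := by
      intro l
      rw [norm_neg, Real.norm_eq_abs, abs_of_nonneg (by positivity)]
      calc z * q ^ l ≤ z * 1 := by
            exact mul_le_mul_of_nonneg_left (hql1 l) hz0
        _ < 1 := by linarith
    have hterm : ∀ n : ℕ,
        (-1) ^ n * z ^ n * ((1 - q ^ ((n : ℝ) + x)) / (1 - q)) ^ k
          = ∑ l ∈ Finset.range (k + 1), A l * (-(z * q ^ l)) ^ n := by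
      intro n
      have ht : q ^ ((n : ℝ) + x) = q ^ n * q ^ x := by
        rw [Real.rpow_add hq0, Real.rpow_natCast]
      rw [ht]
      have hexp : (1 - q ^ n * q ^ x) = (-(q ^ n * q ^ x)) + 1 := by ring
      rw [div_pow, hexp, add_pow, Finset.sum_div, Finset.mul_sum]
      refine Finset.sum_congr rfl fun l _ => ?_
      rw [hA]
      simp only [one_pow, mul_one]
      rw [← hqlx l]
      field_simp
      have h' : (1 - q)⁻¹ ^ k * (1 - q) ^ k = 1 := by
        rw [inv_pow]; exact inv_mul_cancel₀ (pow_ne_zero _ hq1'.ne')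
      linear_combination (-(z ^ n * q ^ (n * l) * (q ^ x) ^ l * (k.choose l : ℝ) * (-1) ^ n * (-1) ^ l)) * h'
    rw [tsum_congr hterm, Summable.tsum_finsetSum]
    · refine Finset.sum_congr rfl fun l _ => ?_
      rw [tsum_mul_left, tsum_geometric_of_norm_lt_one (hr l), sub_neg_eq_add]
    · intro l _
      exact (summable_geometric_of_norm_lt_one (hr l)).mul_left _
  -- the limit value
  have hval : modqEulerPoly q k x
      = (1 + q) * ∑ l ∈ Finset.range (k + 1), A l * (1 + 1 * q ^ l)⁻¹ := by
    rw [modqEulerPoly, mul_assoc, Finset.mul_sum, Finset.mul_sum]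
    conv_rhs => rw [Finset.mul_sum]
    refine Finset.sum_congr rfl fun l _ => ?_
    rw [hA]
    have : (0:ℝ) < 1 + q ^ l := by linarith [hql0 l]
    field_simp
    try ring
  rw [hval]
  -- continuity of the closed form at z = 1
  have hcont : Filter.Tendsto
      (fun z : ℝ => (1 + q) * ∑ l ∈ Finset.range (k + 1), A l * (1 + z * q ^ l)⁻¹)
      (nhdsWithin 1 (Set.Ico 0 1))
      (nhds ((1 + q) * ∑ l ∈ Finset.range (k + 1), A l * (1 + 1 * q ^ l)⁻¹)) := by
    apply Filter.Tendsto.mono_left _ nhdsWithin_le_nhds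
    apply Filter.Tendsto.const_mul
    apply tendsto_finset_sum
    intro l _
    apply Filter.Tendsto.const_mul
    apply Filter.Tendsto.inv₀
    · exact (tendsto_const_nhds.add ((continuous_id.tendsto 1).mul_const _))
    · have := hql0 l; intro h; simp at h; nlinarith
  refine Filter.Tendsto.congr' ?_ hcont
  filter_upwards [self_mem_nhdsWithin] with z hz
  rw [key z hz.1 hz.2]
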